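/- Let β ∈ ℂ with Re(β) > 0, ε > 0, k ∈ ℕ with k ≥ 1, and R > exp^∘k(0) with M_{ε,k}(R) < Re(β). Let D ⊆ ℂ be an open set with Re(ζ) ≥ R for all ζ ∈ D, and suppose there exists d > 0 with |Im(ζ)| ≤ d·Re(ζ) for all ζ ∈ D. Let f : D → ℂ be holomorphic with f(D) ⊆ D and |f(ζ) − (ζ + β)| ≤ M_{ε,k}(Re(ζ)) for all ζ ∈ D, and let φ(ζ) := lim_{n→∞} (f^∘n(ζ) − n·β) (this limit exists for every ζ ∈ D). Then for every ν with 0 < ν < ε one has (φ(ζ) − ζ)·L_k(ζ)^{ν} → 0 uniformly on D as Re(ζ) → +∞; that is, for every δ > 0 there exists R' such that |φ(ζ) − ζ| · |L_k(ζ)|^{ν} ≤ δ for all ζ ∈ D with Re(ζ) ≥ R'. -/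

import Mathlib

open Filter Set

/-- `M_{ε,k}(x) = (∏_{j=0}^{k-1} log^∘j(x))⁻¹ · (log^∘k(x))^{-(1+ε)}`. -/
noncomputable def Mfun (ε : ℝ) (k : ℕ) (x : ℝ) : ℝ :=
  (∏ j ∈ Finset.range k, Real.log^[j] x)⁻¹ * (Real.log^[k] x) ^ (-(1 + ε))

lemma KA_expIter_nonneg (j : ℕ) : 0 ≤ Real.exp^[j] 0 := by
  induction j with
  | zero => simp
  | succ n ih => rw [Function.iterate_succ_apply']; positivity

lemma KA_expIter_mono (j : ℕ) {a b : ℝ} (h : a ≤ b) : Real.exp^[j] a ≤ Real.exp^[j] b := by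
  induction j generalizing a b with
  | zero => simpa
  | succ n ih =>
    rw [Function.iterate_succ_apply, Function.iterate_succ_apply]
    exact ih (Real.exp_le_exp.2 h)

lemma KA_le_logIter {j : ℕ} {y x : ℝ} (h : Real.exp^[j] y ≤ x) : y ≤ Real.log^[j] x := by
  induction j generalizing y x with
  | zero => simpa using h
  | succ n ih =>
    rw [Function.iterate_succ_apply'] at h
    have hx : 0 < x := lt_of_lt_of_le (Real.exp_pos _) h
    rw [Function.iterate_succ_apply]
    exact ih ((Real.le_log_iff_exp_le hx).2 h)

lemma KA_lt_logIter {j : ℕ} {y x : ℝ} (h : Real.exp^[j] y < x) : y < Real.log^[j] x := by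
  induction j generalizing y x with
  | zero => simpa using h
  | succ n ih =>
    rw [Function.iterate_succ_apply'] at h
    have hx : 0 < x := lt_trans (Real.exp_pos _) h
    rw [Function.iterate_succ_apply]
    exact ih ((Real.lt_log_iff_exp_lt hx).2 h)

lemma KA_logIter_mono (j : ℕ) {x y : ℝ} (hx : Real.exp^[j] 0 < x) (hxy : x ≤ y) :
    Real.log^[j] x ≤ Real.log^[j] y := by
  induction j generalizing x y with
  | zero => simpa
  | succ n ih =>
    rw [Function.iterate_succ_apply'] at hx
    have h0 : Real.exp^[n] 0 < x :=
      lt_trans (by linarith [Real.add_one_le_exp (Real.exp^[n] 0)]) hx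
    have hpos : 0 < Real.log^[n] x := KA_lt_logIter h0
    rw [Function.iterate_succ_apply', Function.iterate_succ_apply']
    exact Real.log_le_log hpos (ih h0 hxy)

lemma KA_expIter_le (j k : ℕ) (h : j ≤ k) : Real.exp^[j] 0 ≤ Real.exp^[k] 0 := by
  have : Real.exp^[j] (Real.exp^[k - j] 0) = Real.exp^[k] 0 := by
    rw [← Function.iterate_add_apply]; congr 1; omega
  calc Real.exp^[j] 0 ≤ Real.exp^[j] (Real.exp^[k - j] 0) :=
        KA_expIter_mono j (KA_expIter_nonneg _)
    _ = _ := this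

lemma KA_logIter_pos {k : ℕ} {x : ℝ} (hx : Real.exp^[k] 0 < x) {j : ℕ} (hj : j ≤ k) :
    0 < Real.log^[j] x :=
  KA_lt_logIter (lt_of_le_of_lt (KA_expIter_le j k hj) hx)

lemma KA_one_le_expIter_one (i : ℕ) : 1 ≤ Real.exp^[i] 1 := by
  induction i with
  | zero => simp
  | succ n ih =>
    rw [Function.iterate_succ_apply']
    exact Real.one_le_exp (by linarith)

lemma KA_one_le_logIter {k : ℕ} {x : ℝ} (hx : Real.exp^[k] 1 ≤ x) {j : ℕ} (hj : j ≤ k) :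
    1 ≤ Real.log^[j] x := by
  apply KA_le_logIter
  calc Real.exp^[j] 1 ≤ Real.exp^[j] (Real.exp^[k - j] 1) :=
        KA_expIter_mono j (KA_one_le_expIter_one _)
    _ = Real.exp^[k] 1 := by rw [← Function.iterate_add_apply]; congr 1; omega
    _ ≤ x := hx

lemma KA_expIter_strictMono (j : ℕ) {a b : ℝ} (h : a < b) :
    Real.exp^[j] a < Real.exp^[j] b := by
  induction j generalizing a b with
  | zero => simpa
  | succ n ih =>
    rw [Function.iterate_succ_apply, Function.iterate_succ_apply]
    exact ih (Real.exp_lt_exp.2 h)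

lemma KA_prod_pos {k : ℕ} {x : ℝ} (hx : Real.exp^[k] 0 < x) :
    0 < ∏ j ∈ Finset.range k, Real.log^[j] x :=
  Finset.prod_pos fun j hj => KA_logIter_pos hx (Finset.mem_range.1 hj).le

lemma KA_M_pos {ε : ℝ} {k : ℕ} {x : ℝ} (hx : Real.exp^[k] 0 < x) : 0 < Mfun ε k x := by
  have h1 := KA_prod_pos hx
  have h2 : 0 < Real.log^[k] x := KA_logIter_pos hx le_rfl
  unfold Mfun
  positivity

lemma KA_M_antitone {ε : ℝ} (hε : 0 < ε) {k : ℕ} {x y : ℝ}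
    (hx : Real.exp^[k] 0 < x) (hxy : x ≤ y) : Mfun ε k y ≤ Mfun ε k x := by
  have hy : Real.exp^[k] 0 < y := lt_of_lt_of_le hx hxy
  have hpx := KA_prod_pos hx
  have hLx : 0 < Real.log^[k] x := KA_logIter_pos hx le_rfl
  have hLy : 0 < Real.log^[k] y := KA_logIter_pos hy le_rfl
  have hprod : ∏ j ∈ Finset.range k, Real.log^[j] x ≤ ∏ j ∈ Finset.range k, Real.log^[j] y :=
    Finset.prod_le_prod (fun j hj => (KA_logIter_pos hx (Finset.mem_range.1 hj).le).le)
      (fun j hj => KA_logIter_mono j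
        (lt_of_le_of_lt (KA_expIter_le j k (Finset.mem_range.1 hj).le) hx) hxy)
  have hinv : (∏ j ∈ Finset.range k, Real.log^[j] y)⁻¹ ≤
      (∏ j ∈ Finset.range k, Real.log^[j] x)⁻¹ :=
    inv_anti₀ hpx hprod
  have hL : Real.log^[k] x ≤ Real.log^[k] y := KA_logIter_mono k hx hxy
  have hrpow : (Real.log^[k] y) ^ (-(1 + ε)) ≤ (Real.log^[k] x) ^ (-(1 + ε)) := by
    rw [Real.rpow_neg hLx.le, Real.rpow_neg hLy.le]
    exact inv_anti₀ (Real.rpow_pos_of_pos hLx _)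
      (Real.rpow_le_rpow hLx.le hL (by linarith))
  have h1 : 0 ≤ (Real.log^[k] y) ^ (-(1 + ε)) := (Real.rpow_pos_of_pos hLy _).le
  unfold Mfun
  exact mul_le_mul hinv hrpow h1 (by positivity)

lemma KA_hasDerivAt_logIter (k : ℕ) {x : ℝ} (hx : Real.exp^[k] 0 < x) :
    HasDerivAt (Real.log^[k]) ((∏ j ∈ Finset.range k, Real.log^[j] x)⁻¹) x := by
  induction k with
  | zero => simpa using hasDerivAt_id x
  | succ n ih =>
    have hx' : Real.exp^[n] 0 < x := lt_of_le_of_lt (KA_expIter_le n (n+1) (by omega)) hx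
    have hL : 0 < Real.log^[n] x := KA_logIter_pos hx (by omega)
    have houter : HasDerivAt Real.log (Real.log^[n] x)⁻¹ (Real.log^[n] x) :=
      Real.hasDerivAt_log hL.ne'
    have hcomp := houter.comp x (ih hx')
    have heq : Real.log^[n+1] = Real.log ∘ Real.log^[n] := Function.iterate_succ' _ _
    rw [heq]
    refine hcomp.congr_deriv ?_
    rw [Finset.prod_range_succ, mul_inv]
    ring

lemma KA_hasDerivAt_G {ε : ℝ} (k : ℕ) {x : ℝ} (hx : Real.exp^[k] 0 < x) :
    HasDerivAt (fun t => (Real.log^[k] t) ^ (-ε)) (-ε * Mfun ε k x) x := by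
  have hL : 0 < Real.log^[k] x := KA_logIter_pos hx le_rfl
  have h := (KA_hasDerivAt_logIter k hx).rpow_const (p := -ε) (Or.inl hL.ne')
  convert h using 1
  unfold Mfun
  rw [show -ε - 1 = -(1 + ε) by ring]
  ring

lemma KA_step {ε : ℝ} (hε : 0 < ε) (k : ℕ) {a c : ℝ} (hc : 0 < c)
    (ha : Real.exp^[k] 0 < a) :
    ε * c * Mfun ε k (a + c) ≤ (Real.log^[k] a) ^ (-ε) - (Real.log^[k] (a + c)) ^ (-ε) := by
  have hab : a < a + c := by linarith
  obtain ⟨ξ, hξ, hslope⟩ := exists_hasDerivAt_eq_slope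
    (fun t => (Real.log^[k] t) ^ (-ε)) (fun t => -ε * Mfun ε k t) hab
    (fun t ht => ((KA_hasDerivAt_G k (lt_of_lt_of_le ha ht.1)).continuousAt).continuousWithinAt)
    (fun t ht => KA_hasDerivAt_G k (lt_trans ha ht.1))
  have hξa : Real.exp^[k] 0 < ξ := lt_trans ha hξ.1
  have hMξ : Mfun ε k (a + c) ≤ Mfun ε k ξ := KA_M_antitone hε hξa hξ.2.le
  rw [show a + c - a = c by ring] at hslope
  have h2 : (Real.log^[k] (a + c)) ^ (-ε) - (Real.log^[k] a) ^ (-ε) = c * (-ε * Mfun ε k ξ) := by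
    field_simp at hslope
    linarith [hslope]
  have h3 := mul_le_mul_of_nonneg_left hMξ (by positivity : (0:ℝ) ≤ ε * c)
  nlinarith [h3]

lemma KA_sum {ε : ℝ} (hε : 0 < ε) (k : ℕ) {x c : ℝ} (hc : 0 < c)
    (hx : Real.exp^[k] 0 < x) (n : ℕ) :
    ε * c * ∑ m ∈ Finset.range n, Mfun ε k (x + (m + 1) * c) ≤ (Real.log^[k] x) ^ (-ε) := by
  suffices h : ∀ n : ℕ, ε * c * ∑ m ∈ Finset.range n, Mfun ε k (x + (m + 1) * c) ≤
      (Real.log^[k] x) ^ (-ε) - (Real.log^[k] (x + n * c)) ^ (-ε) by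
    have hL : 0 < Real.log^[k] (x + n * c) :=
      KA_logIter_pos (lt_of_lt_of_le hx (le_add_of_nonneg_right (by positivity))) le_rfl
    have := h n
    have hpos : 0 < (Real.log^[k] (x + n * c)) ^ (-ε) := Real.rpow_pos_of_pos hL _
    linarith
  intro n
  induction n with
  | zero => simp
  | succ n ih =>
    rw [Finset.sum_range_succ, mul_add]
    have ha : Real.exp^[k] 0 < x + n * c := lt_of_lt_of_le hx (le_add_of_nonneg_right (by positivity))
    have hstep := KA_step hε k hc ha
    have e1 : x + n * c + c = x + (n + 1 : ℕ) * c := by push_cast; ring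
    rw [e1] at hstep
    push_cast at ih hstep ⊢
    linarith

lemma KA_M_le_G {ε : ℝ} (hε : 0 < ε) {k : ℕ} {x : ℝ} (hx : Real.exp^[k] 1 ≤ x) :
    Mfun ε k x ≤ (Real.log^[k] x) ^ (-ε) := by
  have hE : Real.exp^[k] 0 < x := by
    have h2 : Real.exp^[k] 0 < Real.exp^[k] 1 := KA_expIter_strictMono k one_pos
    linarith
  have hL1 : 1 ≤ Real.log^[k] x := KA_one_le_logIter hx le_rfl
  have hL : 0 < Real.log^[k] x := by linarith
  have hp1 : 1 ≤ ∏ j ∈ Finset.range k, Real.log^[j] x := by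
    calc (1:ℝ) = ∏ _j ∈ Finset.range k, (1:ℝ) := by simp
      _ ≤ _ := Finset.prod_le_prod (by intros; norm_num)
          (fun j hj => KA_one_le_logIter hx (Finset.mem_range.1 hj).le)
  unfold Mfun
  have e : (Real.log^[k] x) ^ (-(1 + ε)) = (Real.log^[k] x)⁻¹ * (Real.log^[k] x) ^ (-ε) := by
    rw [show -(1 + ε) = (-1) + (-ε) by ring, Real.rpow_add hL, Real.rpow_neg_one]
  rw [e]
  have h1 : (∏ j ∈ Finset.range k, Real.log^[j] x)⁻¹ ≤ 1 := inv_le_one_of_one_le₀ hp1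
  have h2 : (Real.log^[k] x)⁻¹ ≤ 1 := inv_le_one_of_one_le₀ hL1
  have h3 : 0 < (Real.log^[k] x) ^ (-ε) := Real.rpow_pos_of_pos hL _
  calc (∏ j ∈ Finset.range k, Real.log^[j] x)⁻¹ * ((Real.log^[k] x)⁻¹ * Real.log^[k] x ^ (-ε))
      ≤ (Real.log^[k] x)⁻¹ * Real.log^[k] x ^ (-ε) :=
        mul_le_of_le_one_left (by positivity) h1
    _ ≤ Real.log^[k] x ^ (-ε) := mul_le_of_le_one_left h3.le h2

lemma KA_tendsto_logIter (k : ℕ) : Tendsto (Real.log^[k]) atTop atTop := by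
  induction k with
  | zero => simpa using tendsto_id
  | succ n ih =>
    rw [Function.iterate_succ']
    exact Real.tendsto_log_atTop.comp ih

lemma KA_abs_log_le (w : ℂ) :
    ‖Complex.log w‖ ≤ |Real.log (‖w‖)| + Real.pi := by
  unfold Complex.log
  calc ‖↑(Real.log (‖w‖)) + ↑w.arg * Complex.I‖
      ≤ ‖(↑(Real.log (‖w‖)) : ℂ)‖ + ‖↑w.arg * Complex.I‖ :=
        norm_add_le _ _
    _ = |Real.log (‖w‖)| + |w.arg| := by
        simp [Complex.norm_I]
    _ ≤ |Real.log (‖w‖)| + Real.pi := by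
        linarith [Complex.abs_arg_le_pi w]

lemma KA_log_abs_le (w : ℂ) : Real.log (‖w‖) ≤ ‖Complex.log w‖ := by
  calc Real.log (‖w‖) = (Complex.log w).re := (Complex.log_re w).symm
    _ ≤ |(Complex.log w).re| := le_abs_self _
    _ ≤ ‖Complex.log w‖ := Complex.abs_re_le_norm _

lemma KA_lower {k : ℕ} {ζ : ℂ} (hx : Real.exp^[k] 1 ≤ ζ.re) :
    ∀ j, j ≤ k → Real.log^[j] ζ.re ≤ ‖Complex.log^[j] ζ‖ := by
  intro j
  induction j with
  | zero => intro _; simpa using Complex.re_le_norm ζ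
  | succ n ih =>
    intro hn
    have h1 : 1 ≤ Real.log^[n] ζ.re := KA_one_le_logIter hx (by omega)
    have hiw := ih (by omega)
    rw [Function.iterate_succ_apply', Function.iterate_succ_apply']
    calc Real.log (Real.log^[n] ζ.re) ≤ Real.log (‖Complex.log^[n] ζ‖) :=
          Real.log_le_log (by linarith) hiw
      _ ≤ _ := KA_log_abs_le _

lemma KA_log_add_le {a B : ℝ} (ha : 1 ≤ a) (hB : 0 ≤ B) : Real.log (a + B) ≤ Real.log a + B := by
  have h1 : (0:ℝ) < a := by linarith
  have h2 : Real.log (a + B) - Real.log a = Real.log ((a + B) / a) := by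
    rw [Real.log_div (by linarith) (by linarith)]
  have h3 : Real.log ((a + B) / a) ≤ (a + B) / a - 1 :=
    Real.log_le_sub_one_of_pos (by positivity)
  have h4 : (a + B) / a - 1 = B / a := by field_simp; ring
  have h5 : B / a ≤ B := by
    rw [div_le_iff₀ h1]; nlinarith
  linarith

lemma KA_upper {k : ℕ} {ζ : ℂ} {s : ℝ} (hs : 1 ≤ s)
    (hx : Real.exp^[k] 1 ≤ ζ.re) (habs : ‖ζ‖ ≤ ζ.re * s) :
    ∀ i, i + 1 ≤ k →
      ‖Complex.log^[i+1] ζ‖ ≤ Real.log^[i+1] ζ.re + (Real.log s + ((i:ℝ)+1) * Real.pi) := by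
  intro i
  induction i with
  | zero =>
    intro hik
    have hx1 : 1 ≤ ζ.re := KA_one_le_logIter hx (Nat.zero_le k)
    have hζpos : (0:ℝ) < ζ.re := by linarith
    have habs1 : 1 ≤ ‖ζ‖ := le_trans hx1 (Complex.re_le_norm ζ)
    have hlog0 : 0 ≤ Real.log (‖ζ‖) := Real.log_nonneg habs1
    have h2 : Real.log (‖ζ‖) ≤ Real.log ζ.re + Real.log s := by
      calc Real.log (‖ζ‖) ≤ Real.log (ζ.re * s) := Real.log_le_log (by linarith) habs
        _ = Real.log ζ.re + Real.log s := Real.log_mul (by linarith) (by linarith)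
    calc ‖Complex.log^[1] ζ‖
        ≤ |Real.log (‖ζ‖)| + Real.pi := by
          simpa using KA_abs_log_le ζ
      _ = Real.log (‖ζ‖) + Real.pi := by rw [abs_of_nonneg hlog0]
      _ ≤ Real.log^[0+1] ζ.re + (Real.log s + (((0:ℕ):ℝ)+1) * Real.pi) := by
          show Real.log (‖ζ‖) + Real.pi ≤ _
          simp only [Nat.cast_zero, zero_add, one_mul, Function.iterate_one]
          linarith
  | succ n ih =>
    intro hik
    have hIH := ih (by omega)
    have ha1 : 1 ≤ Real.log^[n+1] ζ.re := KA_one_le_logIter hx (by omega)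
    have hlow : Real.log^[n+1] ζ.re ≤ ‖Complex.log^[n+1] ζ‖ :=
      KA_lower hx (n+1) (by omega)
    have hB : 0 ≤ Real.log s + ((n:ℝ)+1) * Real.pi := by
      have h1 := Real.log_nonneg hs
      have h2 := Real.pi_pos
      have h3 : (0:ℝ) ≤ (n:ℝ) := Nat.cast_nonneg n
      nlinarith
    have hwpos : (1:ℝ) ≤ ‖Complex.log^[n+1] ζ‖ := le_trans ha1 hlow
    set a := Real.log^[n+1] ζ.re with ha_def
    set B := Real.log s + ((n:ℝ)+1) * Real.pi with hB_def
    have hlogw : Real.log (‖Complex.log^[n+1] ζ‖) ≤ Real.log a + B := by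
      calc Real.log (‖Complex.log^[n+1] ζ‖) ≤ Real.log (a + B) :=
            Real.log_le_log (by linarith) hIH
        _ ≤ Real.log a + B := KA_log_add_le ha1 hB
    have hnn : 0 ≤ Real.log (‖Complex.log^[n+1] ζ‖) := Real.log_nonneg hwpos
    calc ‖Complex.log^[n+1+1] ζ‖
        ≤ |Real.log (‖Complex.log^[n+1] ζ‖)| + Real.pi := by
          rw [Function.iterate_succ_apply']
          exact KA_abs_log_le _
      _ = Real.log (‖Complex.log^[n+1] ζ‖) + Real.pi := by rw [abs_of_nonneg hnn]
      _ ≤ Real.log a + B + Real.pi := by linarith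
      _ = Real.log^[n+1+1] ζ.re + (Real.log s + (((n+1:ℕ):ℝ)+1) * Real.pi) := by
          rw [Function.iterate_succ_apply' Real.log (n+1), hB_def, ha_def]
          push_cast
          ring

lemma KA_sector {ζ : ℂ} {d : ℝ} (hre : 0 ≤ ζ.re) (him : |ζ.im| ≤ d * ζ.re) :
    ‖ζ‖ ≤ ζ.re * Real.sqrt (1 + d ^ 2) := by
  have h1 : ζ.im ^ 2 ≤ (d * ζ.re) ^ 2 := by
    have := sq_abs ζ.im
    nlinarith [abs_nonneg ζ.im]
  rw [Complex.norm_def, Complex.normSq_apply]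
  calc Real.sqrt (ζ.re * ζ.re + ζ.im * ζ.im)
      ≤ Real.sqrt (ζ.re ^ 2 * (1 + d ^ 2)) := Real.sqrt_le_sqrt (by nlinarith)
    _ = ζ.re * Real.sqrt (1 + d ^ 2) := by
        rw [Real.sqrt_mul (by positivity), Real.sqrt_sq hre]

theorem koenigs_limit_refined_logarithmic_asymptotics
    (β : ℂ) (hβ : 0 < β.re) (ε : ℝ) (hε : 0 < ε) (k : ℕ) (hk : 1 ≤ k)
    (R : ℝ) (hR : Real.exp^[k] 0 < R) (hMR : Mfun ε k R < β.re)
    (D : Set ℂ) (hD : IsOpen D) (hDre : ∀ ζ ∈ D, R ≤ ζ.re)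
    (d : ℝ) (hd : 0 < d) (hDim : ∀ ζ ∈ D, |ζ.im| ≤ d * ζ.re)
    (f : ℂ → ℂ) (hf : DifferentiableOn ℂ f D) (hinv : Set.MapsTo f D D)
    (hbound : ∀ ζ ∈ D, ‖f ζ - (ζ + β)‖ ≤ Mfun ε k ζ.re)
    (φ : ℂ → ℂ)
    (hφ : ∀ ζ ∈ D, Tendsto (fun n : ℕ => f^[n] ζ - (n : ℂ) * β) atTop (nhds (φ ζ))) :
    ∀ ν : ℝ, 0 < ν → ν < ε →
      ∀ δ > (0 : ℝ), ∃ R' : ℝ, ∀ ζ ∈ D, R' ≤ ζ.re →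
        ‖φ ζ - ζ‖ * ‖Complex.log^[k] ζ‖ ^ ν ≤ δ := by
  intro ν hν hνε δ hδ
  set c : ℝ := β.re - Mfun ε k R with hc_def
  have hc0 : 0 < c := by rw [hc_def]; linarith
  set s : ℝ := Real.sqrt (1 + d ^ 2) with hs_def
  have hs1 : (1:ℝ) ≤ s := by
    have h := Real.sqrt_le_sqrt (show (1:ℝ) ≤ 1 + d ^ 2 by nlinarith)
    rw [Real.sqrt_one] at h
    exact h
  set Ak : ℝ := Real.log s + (k:ℝ) * Real.pi with hAk_def
  set C : ℝ := (1 + 1 / (ε * c)) * (2:ℝ) ^ ν with hC_def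
  have htends : Tendsto (fun t => C * (Real.log^[k] t) ^ (ν - ε)) atTop (nhds 0) := by
    have h1 : Tendsto (fun y : ℝ => y ^ (-(ε - ν))) atTop (nhds 0) :=
      tendsto_rpow_neg_atTop (by linarith)
    have h2 := (h1.comp (KA_tendsto_logIter k)).const_mul C
    simpa [Function.comp_def, mul_zero, show -(ε - ν) = ν - ε by ring] using h2
  obtain ⟨R3, hR3⟩ := eventually_atTop.1 (htends.eventually (eventually_le_nhds hδ))
  obtain ⟨R2, hR2⟩ := eventually_atTop.1 ((KA_tendsto_logIter k).eventually_ge_atTop Ak)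
  refine ⟨max (Real.exp^[k] 1) (max R2 R3), ?_⟩
  intro ζ hζ hζre
  have hxR : R ≤ ζ.re := hDre ζ hζ
  have hx1 : Real.exp^[k] 1 ≤ ζ.re := le_trans (le_max_left _ _) hζre
  have hxR2 : R2 ≤ ζ.re := le_trans (le_trans (le_max_left R2 R3) (le_max_right _ _)) hζre
  have hxR3 : R3 ≤ ζ.re := le_trans (le_trans (le_max_right R2 R3) (le_max_right _ _)) hζre
  have hxE : Real.exp^[k] 0 < ζ.re := lt_of_lt_of_le hR hxR
  have hx1' : (1:ℝ) ≤ ζ.re := by simpa using KA_one_le_logIter hx1 (Nat.zero_le k)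
  -- orbit grows
  have horb : ∀ n : ℕ, f^[n] ζ ∈ D ∧ ζ.re + n * c ≤ (f^[n] ζ).re := by
    intro n
    induction n with
    | zero => exact ⟨hζ, by simp⟩
    | succ n ih =>
      obtain ⟨hw, hwre⟩ := ih
      have hwD : f^[n+1] ζ ∈ D := by
        rw [Function.iterate_succ_apply']; exact hinv hw
      refine ⟨hwD, ?_⟩
      rw [Function.iterate_succ_apply']
      set w := f^[n] ζ
      have hwR : R ≤ w.re := hDre w hw
      have hb := hbound w hw
      have habsre : |(f w - (w + β)).re| ≤ Mfun ε k w.re :=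
        le_trans (Complex.abs_re_le_norm _) (by exact hb)
      have hre : w.re + β.re - Mfun ε k w.re ≤ (f w).re := by
        have h1 := (abs_le.1 habsre).1
        simp only [Complex.sub_re, Complex.add_re] at h1
        linarith
      have hM : Mfun ε k w.re ≤ Mfun ε k R := KA_M_antitone hε hR hwR
      push_cast
      linarith [hwre]
  -- partial telescoping bound
  have hpart : ∀ n : ℕ, ‖f^[n] ζ - (n:ℂ) * β - ζ‖ ≤
      ∑ m ∈ Finset.range n, Mfun ε k (ζ.re + m * c) := by
    intro n
    induction n with
    | zero => simp
    | succ n ih =>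
      have hw := (horb n).1
      have hwre := (horb n).2
      have hb := hbound _ hw
      have hE' : Real.exp^[k] 0 < ζ.re + n * c :=
        lt_of_lt_of_le hxE (le_add_of_nonneg_right (by positivity))
      have hM : Mfun ε k (f^[n] ζ).re ≤ Mfun ε k (ζ.re + n * c) := KA_M_antitone hε hE' hwre
      have key : f^[n+1] ζ - ((n+1 : ℕ):ℂ) * β - ζ
          = (f (f^[n] ζ) - (f^[n] ζ + β)) + (f^[n] ζ - (n:ℂ) * β - ζ) := by
        rw [Function.iterate_succ_apply']; push_cast; ring
      rw [key, Finset.sum_range_succ]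
      calc ‖(f (f^[n] ζ) - (f^[n] ζ + β)) + (f^[n] ζ - (n:ℂ) * β - ζ)‖
          ≤ ‖f (f^[n] ζ) - (f^[n] ζ + β)‖ + ‖f^[n] ζ - (n:ℂ) * β - ζ‖ := norm_add_le _ _
        _ ≤ Mfun ε k (ζ.re + n * c) + ∑ m ∈ Finset.range n, Mfun ε k (ζ.re + m * c) :=
            add_le_add (le_trans hb hM) ih
        _ = (∑ m ∈ Finset.range n, Mfun ε k (ζ.re + m * c)) + Mfun ε k (ζ.re + n * c) := by
            ring
  set Lx := Real.log^[k] ζ.re with hLx_def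
  have hLx1 : (1:ℝ) ≤ Lx := KA_one_le_logIter hx1 le_rfl
  have hLxpos : (0:ℝ) < Lx := by linarith
  have hG0 : (0:ℝ) < Lx ^ (-ε) := Real.rpow_pos_of_pos hLxpos _
  have hsumb : ∀ n : ℕ, ∑ m ∈ Finset.range n, Mfun ε k (ζ.re + m * c)
      ≤ Mfun ε k ζ.re + Lx ^ (-ε) / (ε * c) := by
    intro n
    cases n with
    | zero =>
      simp only [Finset.range_zero, Finset.sum_empty]
      have h1 := KA_M_pos (ε := ε) hxE
      have h2 : 0 < Lx ^ (-ε) / (ε * c) := by positivity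
      linarith
    | succ n =>
      rw [Finset.sum_range_succ']
      have h1 := KA_sum hε k hc0 hxE n
      have h2 : ∑ m ∈ Finset.range n, Mfun ε k (ζ.re + ((m:ℝ) + 1) * c)
          ≤ Lx ^ (-ε) / (ε * c) := by
        rw [le_div_iff₀ (by positivity)]
        rw [mul_comm]
        exact h1
      have h3 : ∑ m ∈ Finset.range n, Mfun ε k (ζ.re + ((m+1 : ℕ):ℝ) * c)
          = ∑ m ∈ Finset.range n, Mfun ε k (ζ.re + ((m:ℝ) + 1) * c) := by
        apply Finset.sum_congr rfl
        intro m _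
        push_cast
        ring_nf
      push_cast
      push_cast at h3
      rw [h3]
      simp only [Nat.cast_zero, zero_mul, add_zero]
      linarith
  have hφb : ‖φ ζ - ζ‖ ≤ Mfun ε k ζ.re + Lx ^ (-ε) / (ε * c) := by
    have hlim : Tendsto (fun n : ℕ => ‖f^[n] ζ - (n:ℂ) * β - ζ‖) atTop (nhds ‖φ ζ - ζ‖) :=
      ((hφ ζ hζ).sub_const ζ).norm
    exact le_of_tendsto' hlim fun n => (hpart n).trans (hsumb n)
  have hMG : Mfun ε k ζ.re ≤ Lx ^ (-ε) := KA_M_le_G hε hx1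
  have hφb2 : ‖φ ζ - ζ‖ ≤ (1 + 1/(ε*c)) * Lx ^ (-ε) := by
    have e : (1 + 1/(ε*c)) * Lx ^ (-ε) = Lx ^ (-ε) + Lx ^ (-ε) / (ε * c) := by ring
    rw [e]
    linarith
  -- complex log bound
  have habs : ‖ζ‖ ≤ ζ.re * s := KA_sector (by linarith) (hDim ζ hζ)
  have hupper : ‖Complex.log^[k] ζ‖ ≤ Lx + Ak := by
    obtain ⟨i, rfl⟩ : ∃ i, k = i + 1 := ⟨k - 1, by omega⟩
    have h := KA_upper hs1 hx1 habs i le_rfl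
    rw [hAk_def, hLx_def]
    push_cast
    push_cast at h
    linarith
  have hAkLx : Ak ≤ Lx := hR2 ζ.re hxR2
  have h2L : ‖Complex.log^[k] ζ‖ ≤ 2 * Lx := by linarith
  have hrp : (‖Complex.log^[k] ζ‖) ^ ν ≤ (2 * Lx) ^ ν :=
    Real.rpow_le_rpow (norm_nonneg _) h2L hν.le
  have hfac : (0:ℝ) ≤ (1 + 1/(ε*c)) * Lx ^ (-ε) := by positivity
  have hmain : ‖φ ζ - ζ‖ * (‖Complex.log^[k] ζ‖) ^ ν
      ≤ ((1 + 1/(ε*c)) * Lx ^ (-ε)) * (2*Lx) ^ ν :=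
    mul_le_mul hφb2 hrp (Real.rpow_nonneg (norm_nonneg _) _) hfac
  have hrhs : ((1 + 1/(ε*c)) * Lx ^ (-ε)) * (2*Lx) ^ ν = C * Lx ^ (ν - ε) := by
    rw [hC_def, Real.mul_rpow (by norm_num) hLxpos.le]
    rw [show ν - ε = -ε + ν by ring, Real.rpow_add hLxpos]
    ring
  rw [hrhs] at hmain
  exact le_trans hmain (hR3 ζ.re hxR3)
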